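/- For any partition λ of n with removed-first-row shape μ (so μᵢ = λ_{i+1}), the identity d_λ = q₁q₂ + q₂·(r(r−1)/(n(n−1)))·c_μ + (r(r−1)(r−2)/(n(n−1)(n−2)))·d_μ holds, where r = n − λ₁, qᵢ = (nq−i)/(n−i) with q = λ₁/n, c_μ = Σ_{i≥j} μᵢ(μⱼ−1)/(r(r−1)), and d is as defined, whenever n ≥ 3 and r ≥ 3. -/

import Mathlib

open Finset

/-- `c_ν = Σ_{i≥j} ν_i (ν_j − 1) / (n(n−1))`, for the parts function `p` of a partition of `n`. -/
noncomputable def cS (p : ℕ → ℕ) (n : ℕ) : ℝ :=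
  ∑ i ∈ Finset.range n, ∑ j ∈ Finset.range (i + 1),
    (p i : ℝ) * ((p j : ℝ) - 1) / (n * ((n : ℝ) - 1))

/-- `d_ν = Σ_{i≥j≥k, ν_k>2} ν_i (ν_j − 1)(ν_k − 2) / (n(n−1)(n−2))`. -/
noncomputable def dS (p : ℕ → ℕ) (n : ℕ) : ℝ :=
  ∑ i ∈ Finset.range n, ∑ j ∈ Finset.range (i + 1),
    ∑ k ∈ (Finset.range (j + 1)).filter (fun k => 2 < p k),
      (p i : ℝ) * ((p j : ℝ) - 1) * ((p k : ℝ) - 2) / (n * ((n : ℝ) - 1) * ((n : ℝ) - 2))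

/-- `e_ν = Σ_{i≥j≥k≥l, ν_k>2, ν_l>3} ν_i (ν_j−1)(ν_k−2)(ν_l−3) / (n(n−1)(n−2)(n−3))`. -/
noncomputable def eS (p : ℕ → ℕ) (n : ℕ) : ℝ :=
  ∑ i ∈ Finset.range n, ∑ j ∈ Finset.range (i + 1),
    ∑ k ∈ (Finset.range (j + 1)).filter (fun k => 2 < p k),
      ∑ l ∈ (Finset.range (k + 1)).filter (fun l => 3 < p l),
        (p i : ℝ) * ((p j : ℝ) - 1) * ((p k : ℝ) - 2) * ((p l : ℝ) - 3) /
          (n * ((n : ℝ) - 1) * ((n : ℝ) - 2) * ((n : ℝ) - 3))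

/-! ### Auxiliary numerator sums -/

/-- Numerator of `cS`. -/
noncomputable def S2aux (p : ℕ → ℕ) (m : ℕ) : ℝ :=
  ∑ i ∈ Finset.range m, ∑ j ∈ Finset.range (i + 1), (p i : ℝ) * ((p j : ℝ) - 1)

/-- Numerator of `dS`. -/
noncomputable def S3aux (p : ℕ → ℕ) (m : ℕ) : ℝ :=
  ∑ i ∈ Finset.range m, ∑ j ∈ Finset.range (i + 1), ∑ k ∈ Finset.range (j + 1),
    (if 2 < p k then (p i : ℝ) * ((p j : ℝ) - 1) * ((p k : ℝ) - 2) else 0)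

lemma cS_eq (p : ℕ → ℕ) (m : ℕ) : cS p m = S2aux p m / (m * ((m : ℝ) - 1)) := by
  simp only [cS, S2aux, ← Finset.sum_div]

lemma dS_eq (p : ℕ → ℕ) (m : ℕ) :
    dS p m = S3aux p m / (m * ((m : ℝ) - 1) * ((m : ℝ) - 2)) := by
  unfold dS S3aux
  rw [Finset.sum_div]
  refine Finset.sum_congr rfl fun i _ => ?_
  rw [Finset.sum_div]
  refine Finset.sum_congr rfl fun j _ => ?_
  rw [Finset.sum_filter, Finset.sum_div]
  refine Finset.sum_congr rfl fun k _ => ?_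
  split_ifs <;> simp

lemma S3aux_split (p : ℕ → ℕ) (m : ℕ) :
    S3aux p (m + 1) =
      S3aux (fun i => p (i + 1)) m
      + (∑ i ∈ Finset.range m, ∑ j ∈ Finset.range (i + 1),
          (if 2 < p 0 then (p (i + 1) : ℝ) * ((p (j + 1) : ℝ) - 1) * ((p 0 : ℝ) - 2) else 0))
      + (∑ i ∈ Finset.range m,
          (if 2 < p 0 then (p (i + 1) : ℝ) * ((p 0 : ℝ) - 1) * ((p 0 : ℝ) - 2) else 0))
      + (if 2 < p 0 then (p 0 : ℝ) * ((p 0 : ℝ) - 1) * ((p 0 : ℝ) - 2) else 0) := by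
  unfold S3aux
  rw [Finset.sum_range_succ']
  have h1 : ∀ i ∈ Finset.range m,
      (∑ j ∈ Finset.range (i + 1 + 1), ∑ k ∈ Finset.range (j + 1),
        if 2 < p k then (p (i + 1) : ℝ) * ((p j : ℝ) - 1) * ((p k : ℝ) - 2) else 0)
      = ((∑ j ∈ Finset.range (i + 1), ∑ k ∈ Finset.range (j + 1),
          if 2 < p (k + 1) then
            (p (i + 1) : ℝ) * ((p (j + 1) : ℝ) - 1) * ((p (k + 1) : ℝ) - 2) else 0)
        + (∑ j ∈ Finset.range (i + 1),
          if 2 < p 0 then (p (i + 1) : ℝ) * ((p (j + 1) : ℝ) - 1) * ((p 0 : ℝ) - 2) else 0))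
        + (if 2 < p 0 then (p (i + 1) : ℝ) * ((p 0 : ℝ) - 1) * ((p 0 : ℝ) - 2) else 0) := by
    intro i _
    rw [Finset.sum_range_succ']
    congr 1
    · rw [← Finset.sum_add_distrib]
      refine Finset.sum_congr rfl fun j _ => ?_
      exact Finset.sum_range_succ' _ _
    · simp
  rw [Finset.sum_congr rfl h1]
  simp only [Finset.sum_add_distrib]
  simp [Finset.sum_range_one]

lemma S3aux_trunc (μ : ℕ → ℕ) (r m : ℕ) (hrm : r ≤ m)
    (h0 : ∀ i, r ≤ i → i < m → μ i = 0) : S3aux μ m = S3aux μ r := by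
  unfold S3aux
  refine (Finset.sum_subset (Finset.range_subset_range.2 hrm) fun i hi hni => ?_).symm
  have h : μ i = 0 := h0 i (by simpa using hni) (by simpa using hi)
  simp [h]

lemma S2aux_trunc (μ : ℕ → ℕ) (r m : ℕ) (hrm : r ≤ m)
    (h0 : ∀ i, r ≤ i → i < m → μ i = 0) : S2aux μ m = S2aux μ r := by
  unfold S2aux
  refine (Finset.sum_subset (Finset.range_subset_range.2 hrm) fun i hi hni => ?_).symm
  have h : μ i = 0 := h0 i (by simpa using hni) (by simpa using hi)
  simp [h]

lemma S2aux_zero (μ : ℕ → ℕ) (r : ℕ) (hmono : ∀ i j, i ≤ j → μ j ≤ μ i)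
    (h1 : ∀ i, μ i ≤ 1) : S2aux μ r = 0 := by
  unfold S2aux
  refine Finset.sum_eq_zero fun i _ => Finset.sum_eq_zero fun j hj => ?_
  rcases Nat.lt_or_ge (μ j) 1 with h | h
  · have hj' : j ≤ i := by simpa [Nat.lt_succ_iff] using hj
    have : μ i = 0 := by have := hmono j i hj'; omega
    simp [this]
  · have : μ j = 1 := le_antisymm (h1 j) h
    simp [this]

/-- The key identity on numerators. -/
lemma key (p : ℕ → ℕ) (n r : ℕ) (hmono : ∀ i j, i ≤ j → p j ≤ p i)
    (hsum : ∑ i ∈ Finset.range n, p i = n) (h3 : 3 ≤ n) (hL1 : 1 ≤ p 0)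
    (hrdef : r = n - p 0) :
    S3aux p n = S3aux (fun i => p (i + 1)) r
      + ((p 0 : ℝ) - 2) * S2aux (fun i => p (i + 1)) r
      + (n : ℝ) * ((p 0 : ℝ) - 1) * ((p 0 : ℝ) - 2) := by
  have hLn : p 0 ≤ n := by
    calc p 0 ≤ ∑ i ∈ Finset.range n, p i :=
      Finset.single_le_sum (fun i _ => Nat.zero_le _) (Finset.mem_range.2 (by omega))
    _ = n := hsum
  set m := n - 1 with hm
  have hn' : n = m + 1 := by omega
  have hμsum : ∑ i ∈ Finset.range m, p (i + 1) = r := by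
    have h := Finset.sum_range_succ' p m
    rw [← hn', hsum] at h
    omega
  have hrm : r ≤ m := by omega
  have hμ0 : ∀ i, r ≤ i → i < m → p (i + 1) = 0 := by
    intro i hri him
    by_contra h
    have h1 : 1 ≤ p (i + 1) := by omega
    have hge : i + 1 ≤ ∑ j ∈ Finset.range (i + 1), p (j + 1) := by
      calc i + 1 = ∑ _j ∈ Finset.range (i + 1), 1 := by simp
      _ ≤ _ := Finset.sum_le_sum fun j hj =>
          le_trans h1 (hmono (j + 1) (i + 1) (by
            have := Finset.mem_range.1 hj; omega))
    have hsub : ∑ j ∈ Finset.range (i + 1), p (j + 1) ≤ ∑ j ∈ Finset.range m, p (j + 1) :=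
      Finset.sum_le_sum_of_subset (Finset.range_subset_range.2 (by omega))
    omega
  rw [hn', S3aux_split, S3aux_trunc _ r m hrm hμ0]
  rcases Nat.lt_or_ge 2 (p 0) with hL | hL
  · simp only [if_pos hL]
    have hcast : (∑ i ∈ Finset.range m, (p (i + 1) : ℝ)) = (r : ℝ) := by
      exact_mod_cast hμsum
    have h2 : (∑ i ∈ Finset.range m, ∑ j ∈ Finset.range (i + 1),
          (p (i + 1) : ℝ) * ((p (j + 1) : ℝ) - 1) * ((p 0 : ℝ) - 2))
        = ((p 0 : ℝ) - 2) * S2aux (fun i => p (i + 1)) m := by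
      rw [S2aux, Finset.mul_sum]
      refine Finset.sum_congr rfl fun i _ => ?_
      rw [Finset.mul_sum]
      exact Finset.sum_congr rfl fun j _ => by ring
    have h3' : (∑ i ∈ Finset.range m, (p (i + 1) : ℝ) * ((p 0 : ℝ) - 1) * ((p 0 : ℝ) - 2))
        = (r : ℝ) * ((p 0 : ℝ) - 1) * ((p 0 : ℝ) - 2) := by
      rw [← Finset.sum_mul, ← Finset.sum_mul, hcast]
    rw [h2, h3', S2aux_trunc _ r m hrm hμ0]
    have hnr : (r : ℝ) + (p 0 : ℝ) = ((m + 1 : ℕ) : ℝ) := by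
      have : r + p 0 = m + 1 := by omega
      exact_mod_cast this
    linear_combination ((p 0 : ℝ) - 1) * ((p 0 : ℝ) - 2) * hnr
  · simp only [if_neg (by omega : ¬ 2 < p 0), Finset.sum_const_zero, add_zero]
    rcases (by omega : p 0 = 1 ∨ p 0 = 2) with h | h
    · have hS2 : S2aux (fun i => p (i + 1)) r = 0 :=
        S2aux_zero _ _ (fun i j hij => hmono (i + 1) (j + 1) (by omega))
          (fun i => by have := hmono 0 (i + 1) (Nat.zero_le _); omega)
      rw [hS2, h]
      push_cast
      ring
    · rw [h]
      push_cast
      ring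

lemma yd_sum (lam : YoungDiagram) (n : ℕ) (hn : lam.card = n) :
    ∑ i ∈ Finset.range n, lam.rowLen i = n := by
  have hfib : ∀ c ∈ lam.cells, c.1 ∈ Finset.range n := by
    intro c hc
    rw [Finset.mem_range]
    have hc' : (c.1, c.2) ∈ lam := by simpa using hc
    have hinj : (Finset.range (c.1 + 1)).card ≤ lam.cells.card := by
      apply Finset.card_le_card_of_injOn (fun k => (k, 0))
      · intro k hk
        simp only [Finset.mem_coe, YoungDiagram.mem_cells]
        exact lam.up_left_mem (by
          have := Finset.mem_range.1 hk; omega) (Nat.zero_le _) hc'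
      · intro a _ b _ hab
        exact congrArg Prod.fst hab
    simp only [Finset.card_range] at hinj
    have : lam.cells.card = n := hn
    omega
  calc ∑ i ∈ Finset.range n, lam.rowLen i
      = ∑ i ∈ Finset.range n, (lam.cells.filter fun c => c.1 = i).card := by
        refine Finset.sum_congr rfl fun i _ => ?_
        rw [lam.rowLen_eq_card]
        rfl
    _ = lam.cells.card := (Finset.card_eq_sum_card_fiberwise hfib).symm
    _ = n := hn

lemma yd_pos (lam : YoungDiagram) (h : 0 < lam.card) : 1 ≤ lam.rowLen 0 := by
  obtain ⟨c, hc⟩ := Finset.card_pos.1 h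
  have hc' : (c.1, c.2) ∈ lam := by simpa using hc
  have h00 : (0, 0) ∈ lam := lam.up_left_mem (Nat.zero_le _) (Nat.zero_le _) hc'
  exact YoungDiagram.mem_iff_lt_rowLen.1 h00

/-- Decomposition of `d_λ` according to the first row: with `μᵢ = λ_{i+1}` the shape with
the first row removed, `r = n − λ₁`, `q = λ₁/n` and `qᵢ = (nq−i)/(n−i)`,
`d_λ = q₁q₂ + q₂·(r(r−1)/(n(n−1)))·c_μ + (r(r−1)(r−2)/(n(n−1)(n−2)))·d_μ`. -/
theorem d_first_row_decomposition (lam : YoungDiagram) (n r : ℕ)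
    (hn : lam.card = n) (h3 : 3 ≤ n) (hrdef : r = n - lam.rowLen 0) (hr : 3 ≤ r)
    (q q1 q2 : ℝ) (hq : q = (lam.rowLen 0 : ℝ) / n)
    (hq1 : q1 = ((n : ℝ) * q - 1) / ((n : ℝ) - 1))
    (hq2 : q2 = ((n : ℝ) * q - 2) / ((n : ℝ) - 2)) :
    dS lam.rowLen n =
      q1 * q2 +
        q2 * (((r : ℝ) * ((r : ℝ) - 1)) / ((n : ℝ) * ((n : ℝ) - 1))) *
          cS (fun i => lam.rowLen (i + 1)) r +
        (((r : ℝ) * ((r : ℝ) - 1) * ((r : ℝ) - 2)) /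
            ((n : ℝ) * ((n : ℝ) - 1) * ((n : ℝ) - 2))) *
          dS (fun i => lam.rowLen (i + 1)) r := by
  have hmono : ∀ i j, i ≤ j → lam.rowLen j ≤ lam.rowLen i := fun i j h => lam.rowLen_anti i j h
  have hsum : ∑ i ∈ Finset.range n, lam.rowLen i = n := yd_sum _ _ hn
  have hL1 : 1 ≤ lam.rowLen 0 := yd_pos _ (by omega)
  have hkey := key lam.rowLen n r hmono hsum h3 hL1 hrdef
  have hn3 : (3 : ℝ) ≤ (n : ℝ) := by exact_mod_cast h3
  have hr3 : (3 : ℝ) ≤ (r : ℝ) := by exact_mod_cast hr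
  have hn0 : (n : ℝ) ≠ 0 := by linarith
  have hn1 : (n : ℝ) - 1 ≠ 0 := by intro h; linarith
  have hn2 : (n : ℝ) - 2 ≠ 0 := by intro h; linarith
  have hr0 : (r : ℝ) ≠ 0 := by linarith
  have hr1 : (r : ℝ) - 1 ≠ 0 := by intro h; linarith
  have hr2 : (r : ℝ) - 2 ≠ 0 := by intro h; linarith
  rw [dS_eq, dS_eq, cS_eq, hkey, hq1, hq2, hq]
  field_simp
  ring
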